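/- arXiv:1602.08450 — 2 statements merged into one kernel-verified Lean document; each statement's English description precedes it below -/
import Mathlib

section
/- For every real number x > 0, the unnormalized Jeffreys posterior for a single Lomax observation has finite total mass π/(2x): ∫₀^∞ ∫₀^∞ (α^{1/2} / ((α+1)·(α+2)^{1/2})) · β^{-2} · (1 + x/β)^{-(α+1)} dβ dα = π/(2x). In particular, the posterior distribution of (β, α) under the Jeffreys prior is proper for sample size n = 1. -/
open MeasureTheory Real

lemma lomax_inner_integral (x : ℝ) (hx : 0 < x) {a : ℝ} (ha : 0 < a) :
    ∫ β in Set.Ioi (0 : ℝ), β ^ (-(2 : ℝ)) * (1 + x / β) ^ (-(a + 1))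
      = 1 / (x * a) := by
  have hxa : 0 < x * a := mul_pos hx ha
  have key := integral_Ioi_of_hasDerivAt_of_nonneg
      (g := fun β : ℝ => (x * a)⁻¹ * (β / (β + x)) ^ a)
      (g' := fun β : ℝ => β ^ (-(2 : ℝ)) * (1 + x / β) ^ (-(a + 1)))
      (a := 0) (l := (x * a)⁻¹) ?_ ?_ ?_ ?_
  · rw [key]
    simp [Real.zero_rpow ha.ne', one_div]
  · -- continuity at 0 within Ici 0
    apply ContinuousAt.continuousWithinAt
    have h1 : ContinuousAt (fun β : ℝ => β / (β + x)) 0 := by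
      apply ContinuousAt.div continuousAt_id (continuousAt_id.add continuousAt_const)
      simpa using hx.ne'
    exact continuousAt_const.mul (h1.rpow_const (Or.inr ha.le))
  · -- derivative
    intro β hβ
    have hβ0 : 0 < β := hβ
    have hβx : 0 < β + x := by linarith
    have upos : 0 < β / (β + x) := div_pos hβ0 hβx
    have hu : HasDerivAt (fun β : ℝ => β / (β + x)) (x / (β + x) ^ 2) β := by
      have := (hasDerivAt_id' (x := β)).div ((hasDerivAt_id' (x := β)).add_const x) hβx.ne'
      exact this.congr_deriv (by ring)
    have hr := hu.rpow_const (p := a) (Or.inl upos.ne')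
    have hD := hr.const_mul ((x * a)⁻¹)
    refine hD.congr_deriv (Eq.symm ?_)
    show β ^ (-(2 : ℝ)) * (1 + x / β) ^ (-(a + 1))
      = (x * a)⁻¹ * (x / (β + x) ^ 2 * a * (β / (β + x)) ^ (a - 1))
    have h1 : (1 : ℝ) + x / β = (β + x) / β := by field_simp
    rw [h1]
    have h2 : ((β + x) / β) ^ (-(a + 1)) = (β / (β + x)) ^ (a + 1) := by
      rw [Real.rpow_neg (by positivity), ← Real.inv_rpow (by positivity), inv_div]
    rw [h2]
    have h3 : (β / (β + x)) ^ (a + 1) = (β / (β + x)) ^ (a - 1) * (β / (β + x)) ^ (2 : ℕ) := by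
      rw [← Real.rpow_natCast (β / (β + x)) 2, ← Real.rpow_add upos]
      congr 1
      push_cast
      ring
    have h4 : β ^ (-(2 : ℝ)) = (β ^ (2 : ℕ))⁻¹ := by
      rw [← Real.rpow_natCast β 2, ← Real.rpow_neg hβ0.le]
      norm_num
    rw [h3, h4]
    set t := (β / (β + x)) ^ (a - 1)
    field_simp
  · -- nonneg
    intro β hβ
    have hβ0 : (0:ℝ) < β := hβ
    have : (0:ℝ) ≤ 1 + x / β := by positivity
    exact mul_nonneg (Real.rpow_nonneg hβ0.le _) (Real.rpow_nonneg this _)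
  · -- tendsto
    have h0 : Filter.Tendsto (fun β : ℝ => β / (β + x)) Filter.atTop (nhds 1) := by
      have hden : Filter.Tendsto (fun β : ℝ => β + x) Filter.atTop Filter.atTop :=
        Filter.tendsto_atTop_add_const_right _ x Filter.tendsto_id
      have hx0 : Filter.Tendsto (fun β : ℝ => x / (β + x)) Filter.atTop (nhds 0) :=
        Filter.Tendsto.div_atTop tendsto_const_nhds hden
      have := (tendsto_const_nhds (x := (1:ℝ)) (f := Filter.atTop)).sub hx0
      rw [sub_zero] at this
      apply this.congr'
      filter_upwards [Filter.eventually_gt_atTop (0:ℝ)] with β hβ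
      have : β + x ≠ 0 := by positivity
      field_simp
      ring
    have h1 : Filter.Tendsto (fun β : ℝ => (β / (β + x)) ^ a) Filter.atTop (nhds 1) := by
      have hc : ContinuousAt (fun t : ℝ => t ^ a) 1 :=
        Real.continuousAt_rpow_const 1 a (Or.inl one_ne_zero)
      have := hc.tendsto.comp h0
      simpa [Real.one_rpow, Function.comp_def] using this
    have := h1.const_mul ((x * a)⁻¹)
    simpa using this

/-- The unnormalized Jeffreys posterior for a single Lomax observation x > 0 has finite
    total mass π/(2x), i.e. the posterior is proper for sample size n = 1. -/
theorem jeffreys_posterior_proper_single_obs (x : ℝ) (hx : 0 < x) :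
    ∫ α in Set.Ioi (0 : ℝ), ∫ β in Set.Ioi (0 : ℝ),
        (α ^ ((1 : ℝ) / 2) / ((α + 1) * (α + 2) ^ ((1 : ℝ) / 2)))
          * β ^ (-(2 : ℝ)) * (1 + x / β) ^ (-(α + 1))
      = π / (2 * x) := by
  have step : ∀ a ∈ Set.Ioi (0 : ℝ),
      (∫ β in Set.Ioi (0 : ℝ),
        (a ^ ((1 : ℝ) / 2) / ((a + 1) * (a + 2) ^ ((1 : ℝ) / 2)))
          * β ^ (-(2 : ℝ)) * (1 + x / β) ^ (-(a + 1)))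
      = (a ^ ((1 : ℝ) / 2) / ((a + 1) * (a + 2) ^ ((1 : ℝ) / 2))) * (1 / (x * a)) := by
    intro a ha
    have ha0 : (0:ℝ) < a := ha
    simp_rw [mul_assoc]
    rw [integral_const_mul, lomax_inner_integral x hx ha0]
  rw [setIntegral_congr_fun measurableSet_Ioi step]
  have key := integral_Ioi_of_hasDerivAt_of_nonneg
      (g := fun a : ℝ => 1 / x * Real.arctan (Real.sqrt (a * (a + 2))))
      (g' := fun a : ℝ =>
        (a ^ ((1 : ℝ) / 2) / ((a + 1) * (a + 2) ^ ((1 : ℝ) / 2))) * (1 / (x * a)))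
      (a := 0) (l := 1 / x * (π / 2)) ?_ ?_ ?_ ?_
  · rw [key]
    simp
    ring
  · -- continuity
    apply Continuous.continuousWithinAt
    exact continuous_const.mul (Real.continuous_arctan.comp
      (Real.continuous_sqrt.comp (by continuity)))
  · -- derivative
    intro a ha
    have ha0 : (0:ℝ) < a := ha
    have hp : (0:ℝ) < a * (a + 2) := by positivity
    have hderiv_p : HasDerivAt (fun a : ℝ => a * (a + 2)) (2 * a + 2) a := by
      have := (hasDerivAt_id' (x := a)).mul ((hasDerivAt_id' (x := a)).add_const 2)
      exact this.congr_deriv (by ring)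
    have hs : HasDerivAt (fun a : ℝ => Real.sqrt (a * (a + 2)))
        (1 / (2 * Real.sqrt (a * (a + 2))) * (2 * a + 2)) a :=
      (Real.hasDerivAt_sqrt hp.ne').comp a hderiv_p
    have harc := (Real.hasDerivAt_arctan (Real.sqrt (a * (a + 2)))).comp a hs
    have hD := harc.const_mul (1 / x)
    refine hD.congr_deriv (Eq.symm ?_)
    show a ^ ((1 : ℝ) / 2) / ((a + 1) * (a + 2) ^ ((1 : ℝ) / 2)) * (1 / (x * a))
      = 1 / x * (1 / (1 + Real.sqrt (a * (a + 2)) ^ 2)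
          * (1 / (2 * Real.sqrt (a * (a + 2))) * (2 * a + 2)))
    have hsq : Real.sqrt (a * (a + 2)) ^ 2 = a * (a + 2) := Real.sq_sqrt hp.le
    have hsplit : Real.sqrt (a * (a + 2)) = Real.sqrt a * Real.sqrt (a + 2) :=
      Real.sqrt_mul ha0.le _
    rw [← Real.sqrt_eq_rpow, ← Real.sqrt_eq_rpow]
    set sa := Real.sqrt a with hsa_def
    set sb := Real.sqrt (a + 2) with hsb_def
    have hsa : sa ^ 2 = a := Real.sq_sqrt ha0.le
    have hsb : sb ^ 2 = a + 2 := Real.sq_sqrt (by linarith)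
    have hsa0 : 0 < sa := Real.sqrt_pos.mpr ha0
    have hsb0 : 0 < sb := Real.sqrt_pos.mpr (by linarith)
    have h1 : 1 + a * (a + 2) = (a + 1) ^ 2 := by ring
    rw [hsq, hsplit, h1]
    have ha1 : (0:ℝ) < a + 1 := by linarith
    field_simp
    linear_combination hsa
  · -- nonneg
    intro a ha
    have ha0 : (0:ℝ) < a := ha
    apply mul_nonneg
    · apply div_nonneg (Real.rpow_nonneg ha0.le _)
      exact mul_nonneg (by linarith) (Real.rpow_nonneg (by linarith) _)
    · positivity
  · -- tendsto
    have h1 : Filter.Tendsto (fun a : ℝ => a * (a + 2)) Filter.atTop Filter.atTop := by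
      apply Filter.tendsto_atTop_mono' _ _ Filter.tendsto_id
      filter_upwards [Filter.eventually_ge_atTop (0:ℝ)] with a ha
      simp only [id_eq]
      nlinarith
    have hsqrt : Filter.Tendsto Real.sqrt Filter.atTop Filter.atTop := by
      have := tendsto_rpow_atTop (y := (1:ℝ)/2) (by norm_num)
      simpa only [← Real.sqrt_eq_rpow] using this
    have h2 := hsqrt.comp h1
    have h3 := (Real.tendsto_arctan_atTop.mono_right nhdsWithin_le_nhds).comp h2
    exact h3.const_mul (1 / x)
end

section
/- For every real number x > 0, the unnormalized reference-prior posterior for a single Lomax observation has infinite total mass: ∫₀^∞ ∫₀^∞ (1/(α·β)) · (α/β)·(1 + x/β)^{-(α+1)} dβ dα = ∞. That is, the posterior distribution of (β, α) under the reference prior π(β,α) ∝ 1/(α·β) is improper for sample size n = 1. -/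
open MeasureTheory Real
open Set

-- divergence of 1/α on (0,1)
lemma aux_inv_top : ∫⁻ a in Ioo (0:ℝ) 1, ENNReal.ofReal a⁻¹ = ⊤ := by
  by_contra h
  have hm : AEStronglyMeasurable (fun a : ℝ => a⁻¹)
      (volume.restrict (Ioo (0:ℝ) 1)) :=
    (measurable_inv).aestronglyMeasurable
  have hnn : 0 ≤ᵐ[volume.restrict (Ioo (0:ℝ) 1)] fun a : ℝ => a⁻¹ :=
    (ae_restrict_iff' measurableSet_Ioo).2 (ae_of_all _ fun a ha => inv_nonneg.2 ha.1.le)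
  have hint : IntegrableOn (fun a : ℝ => a⁻¹) (Ioo (0:ℝ) 1) := by
    refine ⟨hm, (hasFiniteIntegral_iff_ofReal hnn).2 ?_⟩
    exact lt_top_iff_ne_top.2 h
  have : IntegrableOn (fun a : ℝ => a ^ (-1 : ℝ)) (Ioo (0:ℝ) 1) := by
    refine hint.congr_fun (fun a ha => ?_) measurableSet_Ioo
    rw [rpow_neg_one]
  rw [intervalIntegral.integrableOn_Ioo_rpow_iff one_pos] at this
  linarith

-- value of inner β-integral lower bound piece
lemma aux_rpow_int {x α : ℝ} (hx : 0 < x) (hα : 0 < α) :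
    ∫⁻ β in Ioo (0:ℝ) x, ENNReal.ofReal (β ^ (α - 1)) = ENNReal.ofReal (x ^ α / α) := by
  have hint : IntegrableOn (fun β : ℝ => β ^ (α - 1)) (Ioo (0:ℝ) x) :=
    (intervalIntegral.integrableOn_Ioo_rpow_iff hx).2 (by linarith)
  have hnn : 0 ≤ᵐ[volume.restrict (Ioo (0:ℝ) x)] fun β : ℝ => β ^ (α - 1) :=
    (ae_restrict_iff' measurableSet_Ioo).2 (ae_of_all _ fun β hβ => rpow_nonneg hβ.1.le _)
  rw [← ofReal_integral_eq_lintegral_ofReal hint hnn]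
  congr 1
  rw [← integral_Ioc_eq_integral_Ioo, ← intervalIntegral.integral_of_le hx.le,
      integral_rpow (Or.inl (by linarith))]
  rw [sub_add_cancel, zero_rpow hα.ne', sub_zero]

lemma aux_pt {x α β : ℝ} (hx : 0 < x) (hα : α ∈ Ioo (0:ℝ) 1) (hβ : β ∈ Ioo (0:ℝ) x) :
    (2*x) ^ (-(α+1)) * β ^ (α-1) ≤ (1/(α*β)) * ((α/β) * (1 + x/β) ^ (-(α+1))) := by
  obtain ⟨hβ0, hβx⟩ := hβ
  obtain ⟨hα0, hα1⟩ := hα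
  have e1 : (1/(α*β)) * ((α/β) * (1 + x/β) ^ (-(α+1)))
      = (1 + x/β) ^ (-(α+1)) / β^2 := by
    field_simp
  rw [e1]
  have hxb : (1:ℝ) ≤ x / β := (one_le_div hβ0).2 hβx.le
  have hA : (2*x/β) ^ (-(α+1)) ≤ (1 + x/β) ^ (-(α+1)) := by
    have h2x : 2*x/β = 2*(x/β) := by ring
    refine rpow_le_rpow_of_nonpos (by positivity) (by rw [h2x]; linarith) (by linarith)
  have hB : (2*x/β) ^ (-(α+1)) = (2*x) ^ (-(α+1)) * β ^ (α+1) := by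
    rw [div_rpow (by positivity) hβ0.le, rpow_neg hβ0.le, div_eq_mul_inv, inv_inv]
  have hC : β ^ (α-1) = β ^ (α+1) / β^2 := by
    rw [← rpow_natCast β 2, ← rpow_sub hβ0]
    congr 1
    push_cast
    ring
  calc (2*x) ^ (-(α+1)) * β ^ (α-1) = (2*x/β) ^ (-(α+1)) / β^2 := by
        rw [hC, hB]; ring
    _ ≤ (1 + x/β) ^ (-(α+1)) / β^2 := by
        apply div_le_div_of_nonneg_right hA; positivity

lemma aux_key {x α : ℝ} (hx : 0 < x) (hα : α ∈ Ioo (0:ℝ) 1) :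
    ENNReal.ofReal (1/(4*x)) * ENNReal.ofReal α⁻¹ ≤
      ∫⁻ β in Ioi (0:ℝ),
        ENNReal.ofReal ((1 / (α * β)) * ((α / β) * (1 + x / β) ^ (-(α + 1)))) := by
  obtain ⟨hα0, hα1⟩ := hα
  have step1 : ∫⁻ β in Ioo (0:ℝ) x,
      ENNReal.ofReal ((2*x) ^ (-(α+1)) * β ^ (α-1)) ≤
      ∫⁻ β in Ioo (0:ℝ) x,
        ENNReal.ofReal ((1 / (α * β)) * ((α / β) * (1 + x / β) ^ (-(α + 1)))) := by
    refine lintegral_mono_ae ((ae_restrict_iff' measurableSet_Ioo).2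
      (ae_of_all _ fun β hβ => ?_))
    exact ENNReal.ofReal_le_ofReal (aux_pt hx ⟨hα0, hα1⟩ hβ)
  have step2 : ∫⁻ β in Ioo (0:ℝ) x,
      ENNReal.ofReal ((2*x) ^ (-(α+1)) * β ^ (α-1))
      = ENNReal.ofReal ((2*x) ^ (-(α+1))) * ENNReal.ofReal (x ^ α / α) := by
    rw [← aux_rpow_int hx hα0, ← lintegral_const_mul' _ _ ENNReal.ofReal_ne_top]
    congr 1 with β
    rw [← ENNReal.ofReal_mul (by positivity)]
  have step3 : ENNReal.ofReal (1/(4*x)) * ENNReal.ofReal α⁻¹ ≤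
      ENNReal.ofReal ((2*x) ^ (-(α+1))) * ENNReal.ofReal (x ^ α / α) := by
    rw [← ENNReal.ofReal_mul (by positivity), ← ENNReal.ofReal_mul (by positivity)]
    refine ENNReal.ofReal_le_ofReal ?_
    have h2 : (1:ℝ)/4 ≤ (2:ℝ) ^ (-(α+1)) := by
      have h4 : ((2:ℝ)) ^ (-(2:ℝ)) = 1/4 := by
        rw [show (-(2:ℝ)) = ((-2 : ℤ) : ℝ) by norm_num, rpow_intCast]
        norm_num
      calc (1:ℝ)/4 = (2:ℝ) ^ (-(2:ℝ)) := h4.symm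
        _ ≤ (2:ℝ) ^ (-(α+1)) := rpow_le_rpow_of_exponent_le one_le_two (by linarith)
    have hxpow : (2*x) ^ (-(α+1)) * x ^ α = (2:ℝ) ^ (-(α+1)) * x⁻¹ := by
      rw [mul_rpow (by norm_num) hx.le, mul_assoc, ← rpow_add hx]
      congr 1
      rw [show -(α+1) + α = -1 by ring, rpow_neg_one]
    calc (1:ℝ)/(4*x) * α⁻¹ = ((1:ℝ)/4 * x⁻¹) * α⁻¹ := by
          rw [one_div, mul_inv]; ring
      _ ≤ ((2:ℝ) ^ (-(α+1)) * x⁻¹) * α⁻¹ := by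
          have hx' : (0:ℝ) ≤ x⁻¹ := by positivity
          have hα' : (0:ℝ) ≤ α⁻¹ := by positivity
          exact mul_le_mul_of_nonneg_right (mul_le_mul_of_nonneg_right h2 hx') hα'
      _ = (2*x) ^ (-(α+1)) * (x ^ α / α) := by
          rw [← hxpow]; field_simp
  refine le_trans step3 (le_trans (le_of_eq step2.symm) (le_trans step1 ?_))
  exact lintegral_mono_set (fun b hb => hb.1)

/-- The unnormalized reference-prior posterior for a single Lomax observation x > 0 has
    infinite total mass, i.e. the posterior under π(β,α) ∝ 1/(αβ) is improper for n = 1. -/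
theorem reference_posterior_improper_single_obs (x : ℝ) (hx : 0 < x) :
    ∫⁻ α in Set.Ioi (0 : ℝ), ∫⁻ β in Set.Ioi (0 : ℝ),
        ENNReal.ofReal ((1 / (α * β)) * ((α / β) * (1 + x / β) ^ (-(α + 1))))
      = ⊤ := by
  rw [eq_top_iff]
  have hT : ∫⁻ α in Ioo (0:ℝ) 1, ENNReal.ofReal (1/(4*x)) * ENNReal.ofReal α⁻¹ = ⊤ := by
    rw [lintegral_const_mul' _ _ ENNReal.ofReal_ne_top, aux_inv_top,
      ENNReal.mul_top (ENNReal.ofReal_pos.2 (by positivity)).ne']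
  calc (⊤ : ENNReal) = ∫⁻ α in Ioo (0:ℝ) 1,
        ENNReal.ofReal (1/(4*x)) * ENNReal.ofReal α⁻¹ := hT.symm
    _ ≤ ∫⁻ α in Ioo (0:ℝ) 1, ∫⁻ β in Set.Ioi (0 : ℝ),
        ENNReal.ofReal ((1 / (α * β)) * ((α / β) * (1 + x / β) ^ (-(α + 1)))) :=
      lintegral_mono_ae ((ae_restrict_iff' measurableSet_Ioo).2
        (ae_of_all _ fun α hα => aux_key hx hα))
    _ ≤ _ := lintegral_mono_set (fun a ha => ha.1)
end
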